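/- Let (I, e, N, ᾱ, d) be a fusion algebra datum with a proper length function ℓ, and assume the datum has strong polynomial growth of order s with respect to ℓ. For Λ ≥ 0 set A_Λ := {α ∈ I : ℓ(α) ≤ Λ}, for π ∈ I set ∂_π(A_Λ) := {α ∈ A_Λ : ∃β ∉ A_Λ with N_{α,π}^β ≠ 0} ∪ {β ∉ A_Λ : ∃α ∈ A_Λ with N_{β,π}^α ≠ 0}, and for a finite S ⊆ I set ∂_S(A_Λ) := ⋃_{π∈S} ∂_π(A_Λ). Then for every finite nonempty subset S ⊆ I and every ε > 0 there exists Λ₀ ∈ ℕ such that for every integer Λ ≥ Λ₀ one has ∑_{ξ ∈ ∂_S(A_Λ)} d(ξ)² < ε·∑_{ξ ∈ A_Λ} d(ξ)² (both sums are finite sums, since ℓ is proper). -/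

import Mathlib

/-- A fusion algebra datum on an index set `I`: a unit `e`, structure constants
`N`, a conjugation `bar`, and a dimension function `d`, satisfying finiteness
of fusion, the unit rules, Frobenius reciprocity and multiplicativity of `d`. -/
structure FusionData (I : Type*) where
  e : I
  N : I → I → I → ℕ
  bar : I → I
  d : I → ℝ
  N_fin : ∀ α β, (Function.support (N α β)).Finite
  bar_bar : ∀ α, bar (bar α) = α
  bar_e : bar e = e
  one_le_d : ∀ α, 1 ≤ d α
  d_bar : ∀ α, d (bar α) = d α
  N_unit_right : ∀ α, N α e α = 1
  N_unit_right' : ∀ α γ, γ ≠ α → N α e γ = 0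
  N_unit_left : ∀ α, N e α α = 1
  N_unit_left' : ∀ α γ, γ ≠ α → N e α γ = 0
  frob₁ : ∀ α β γ, N α β γ = N (bar α) γ β
  frob₂ : ∀ α β γ, N α β γ = N γ (bar β) α
  d_mul : ∀ α β, d α * d β = ∑ᶠ γ, (N α β γ : ℝ) * d γ

/-- A length function on a fusion algebra datum. -/
structure IsLength {I : Type*} (F : FusionData I) (ℓ : I → ℝ) : Prop where
  nonneg : ∀ α, 0 ≤ ℓ α
  map_e : ℓ F.e = 0
  map_bar : ∀ α, ℓ (F.bar α) = ℓ α
  subadd : ∀ α β γ, F.N α β γ ≠ 0 → ℓ γ ≤ ℓ α + ℓ β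

/-- A length function is proper if balls are finite and only `e` has length 0. -/
def IsProperLength {I : Type*} (F : FusionData I) (ℓ : I → ℝ) : Prop :=
  (∀ R : ℝ, 0 ≤ R → {α : I | ℓ α ≤ R}.Finite) ∧ ∀ α, ℓ α = 0 → α = F.e

/-- The fusion product `(f · ξ)(γ) = ∑_{α,β} f(α) ξ(β) N_{α,β}^γ`. -/
noncomputable def fmul {I : Type*} (F : FusionData I) (f ξ : I → ℂ) : I → ℂ :=
  fun γ => ∑ᶠ α, ∑ᶠ β, f α * ξ β * (F.N α β γ : ℂ)

/-- The weighted `ℓ²`-norm `‖ξ‖₂ = (∑_γ |ξ(γ)|² d(γ)²)^{1/2}`. -/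
noncomputable def norm2 {I : Type*} (F : FusionData I) (ξ : I → ℂ) : ℝ :=
  Real.sqrt (∑ᶠ γ, ‖ξ γ‖ ^ 2 * F.d γ ^ 2)


/-- **Følner property.** For a fusion algebra datum with a proper
length function and strong polynomial growth of order `s`, for every finite
nonempty `S ⊆ I` and every `ε > 0`, eventually in `Λ` the weighted size of the
boundary `∂_S(A_Λ)` is less than `ε` times the weighted size of `A_Λ`. -/
theorem stmt_5 {I : Type*} (F : FusionData I) (ℓ : I → ℝ) (hℓ : IsLength F ℓ)
    (hproper : IsProperLength F ℓ)
    (s c₁ c₂ : ℝ) (hs : 0 < s) (hc₁ : 0 < c₁) (hc₂ : 0 < c₂)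
    (hlow : ∀ n : ℕ, 1 ≤ n →
      c₂ * (n : ℝ) ^ s ≤ ∑ᶠ α ∈ {α : I | (n : ℝ) - 1 < ℓ α ∧ ℓ α ≤ n}, F.d α ^ 2)
    (hup : ∀ n : ℕ, 1 ≤ n →
      ∑ᶠ α ∈ {α : I | (n : ℝ) - 1 < ℓ α ∧ ℓ α ≤ n}, F.d α ^ 2 ≤ c₁ * (n : ℝ) ^ s)
    (S : Finset I) (hS : S.Nonempty) (ε : ℝ) (hε : 0 < ε) :
    ∃ Λ₀ : ℕ, ∀ Λ : ℕ, Λ₀ ≤ Λ →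
      ∑ᶠ ξ ∈ (⋃ π ∈ S, ({α : I | ℓ α ≤ (Λ : ℝ) ∧ ∃ β : I, ¬ ℓ β ≤ (Λ : ℝ) ∧ F.N α π β ≠ 0} ∪
                        {β : I | ¬ ℓ β ≤ (Λ : ℝ) ∧ ∃ α : I, ℓ α ≤ (Λ : ℝ) ∧ F.N β π α ≠ 0})),
          F.d ξ ^ 2
        < ε * ∑ᶠ ξ ∈ {α : I | ℓ α ≤ (Λ : ℝ)}, F.d ξ ^ 2 := by
  classical
  obtain ⟨hfin0, -⟩ := hproper
  have hfin : ∀ R : ℝ, {α : I | ℓ α ≤ R}.Finite := by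
    intro R
    rcases le_or_gt 0 R with h | h
    · exact hfin0 R h
    · have : {α : I | ℓ α ≤ R} = ∅ := by
        ext α
        simp only [Set.mem_setOf_eq, Set.mem_empty_iff_false, iff_false]
        intro hle; linarith [hℓ.nonneg α]
      rw [this]; exact Set.finite_empty
  set ball : ℕ → Finset I := fun n => (hfin n).toFinset with hballdef
  have mem_ball : ∀ (n : ℕ) (α : I), α ∈ ball n ↔ ℓ α ≤ (n : ℝ) := by
    intro n α; simp [hballdef, Set.Finite.mem_toFinset]
  set B : ℕ → ℝ := fun n => ∑ x ∈ ball n, F.d x ^ 2 with hBdef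
  have hB : ∀ n : ℕ, ∑ᶠ ξ ∈ {α : I | ℓ α ≤ (n : ℝ)}, F.d ξ ^ 2 = B n := fun n =>
    finsum_mem_eq_finite_toFinset_sum _ (hfin n)
  have hshellfin : ∀ n : ℕ, {α : I | (n : ℝ) - 1 < ℓ α ∧ ℓ α ≤ (n : ℝ)}.Finite :=
    fun n => (hfin n).subset fun α hα => hα.2
  set shellF : ℕ → Finset I := fun n => (hshellfin n).toFinset with hshelldef
  have mem_shell : ∀ (n : ℕ) (α : I), α ∈ shellF n ↔ (n : ℝ) - 1 < ℓ α ∧ ℓ α ≤ (n : ℝ) := by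
    intro n α; simp [hshelldef, Set.Finite.mem_toFinset]
  set T : ℕ → ℝ := fun n => ∑ x ∈ shellF n, F.d x ^ 2 with hTdef
  have hT : ∀ n : ℕ, ∑ᶠ α ∈ {α : I | (n : ℝ) - 1 < ℓ α ∧ ℓ α ≤ (n : ℝ)}, F.d α ^ 2 = T n :=
    fun n => finsum_mem_eq_finite_toFinset_sum _ (hshellfin n)
  have hTup : ∀ n : ℕ, 1 ≤ n → T n ≤ c₁ * (n : ℝ) ^ s := fun n hn => (hT n) ▸ hup n hn
  have hTlow : ∀ n : ℕ, 1 ≤ n → c₂ * (n : ℝ) ^ s ≤ T n := fun n hn => (hT n) ▸ hlow n hn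
  have hBnonneg : ∀ n, 0 ≤ B n := fun n => Finset.sum_nonneg fun x _ => sq_nonneg _
  -- recurrence
  have hrec : ∀ n : ℕ, B (n + 1) = B n + T (n + 1) := by
    intro n
    have hdisj : Disjoint (ball n) (shellF (n + 1)) := by
      rw [Finset.disjoint_left]
      intro a ha hb
      rw [mem_ball] at ha
      rw [mem_shell] at hb
      have := hb.1
      push_cast at this
      linarith
    have hun : ball (n + 1) = ball n ∪ shellF (n + 1) := by
      ext a
      rw [Finset.mem_union, mem_ball, mem_ball, mem_shell]
      push_cast
      constructor
      · intro h
        rcases le_or_gt (ℓ a) n with h' | h'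
        · exact Or.inl h'
        · exact Or.inr ⟨by linarith, h⟩
      · rintro (h | ⟨h1, h2⟩)
        · linarith
        · linarith
    show (∑ x ∈ ball (n + 1), F.d x ^ 2) = _
    rw [hun, Finset.sum_union hdisj]
  have key_up : ∀ a k : ℕ, B (a + k) ≤ B a + (k : ℝ) * (c₁ * ((a + k : ℕ) : ℝ) ^ s) := by
    intro a k
    induction k with
    | zero => simp
    | succ k ih =>
      have h1 : B (a + (k + 1)) = B (a + k) + T (a + k + 1) := hrec (a + k)
      have h2 : T (a + k + 1) ≤ c₁ * ((a + k + 1 : ℕ) : ℝ) ^ s := hTup _ (by omega)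
      have hmono : ((a + k : ℕ) : ℝ) ^ s ≤ ((a + k + 1 : ℕ) : ℝ) ^ s :=
        Real.rpow_le_rpow (Nat.cast_nonneg _) (by push_cast; linarith) hs.le
      have h3 : (k : ℝ) * (c₁ * ((a + k : ℕ) : ℝ) ^ s) ≤
          (k : ℝ) * (c₁ * ((a + k + 1 : ℕ) : ℝ) ^ s) := by
        apply mul_le_mul_of_nonneg_left _ (Nat.cast_nonneg k)
        exact mul_le_mul_of_nonneg_left hmono hc₁.le
      have hcast : ((a + (k + 1) : ℕ) : ℝ) = ((a + k + 1 : ℕ) : ℝ) := by push_cast; ring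
      rw [h1, hcast]
      have hexp : ((k : ℝ) + 1) * (c₁ * ((a + k + 1 : ℕ) : ℝ) ^ s) =
          (k : ℝ) * (c₁ * ((a + k + 1 : ℕ) : ℝ) ^ s) + c₁ * ((a + k + 1 : ℕ) : ℝ) ^ s := by ring
      push_cast
      push_cast at ih h3 h2 hexp
      linarith
  have key_low : ∀ a k : ℕ, B a + (k : ℝ) * (c₂ * ((a + 1 : ℕ) : ℝ) ^ s) ≤ B (a + k) := by
    intro a k
    induction k with
    | zero => simp
    | succ k ih =>
      have h1 : B (a + (k + 1)) = B (a + k) + T (a + k + 1) := hrec (a + k)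
      have h2 : c₂ * ((a + k + 1 : ℕ) : ℝ) ^ s ≤ T (a + k + 1) := hTlow _ (by omega)
      have hmono : ((a + 1 : ℕ) : ℝ) ^ s ≤ ((a + k + 1 : ℕ) : ℝ) ^ s :=
        Real.rpow_le_rpow (Nat.cast_nonneg _) (by push_cast; linarith [Nat.cast_nonneg (α := ℝ) k]) hs.le
      have h3 : c₂ * ((a + 1 : ℕ) : ℝ) ^ s ≤ c₂ * ((a + k + 1 : ℕ) : ℝ) ^ s :=
        mul_le_mul_of_nonneg_left hmono hc₂.le
      rw [h1]
      have hexp : ((k : ℝ) + 1) * (c₂ * ((a + 1 : ℕ) : ℝ) ^ s) =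
          (k : ℝ) * (c₂ * ((a + 1 : ℕ) : ℝ) ^ s) + c₂ * ((a + 1 : ℕ) : ℝ) ^ s := by ring
      push_cast
      push_cast at ih h3 h2 hexp
      linarith
  -- constants
  set L : ℝ := S.sup' hS ℓ with hLdef
  have hL : ∀ π ∈ S, ℓ π ≤ L := fun π hπ => Finset.le_sup' ℓ hπ
  obtain ⟨π₀, hπ₀⟩ := hS
  have hL0 : 0 ≤ L := le_trans (hℓ.nonneg π₀) (hL π₀ hπ₀)
  set M : ℕ := max 1 ⌈L⌉₊ with hMdef
  have hM1 : 1 ≤ M := le_max_left _ _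
  have hLM : L ≤ (M : ℝ) :=
    le_trans (Nat.le_ceil L) (by exact_mod_cast le_max_right 1 ⌈L⌉₊)
  have hM0 : (0 : ℝ) < (M : ℝ) := by exact_mod_cast hM1
  have h2s : (0 : ℝ) < (2 : ℝ) ^ s := Real.rpow_pos_of_pos two_pos s
  set K : ℝ := 2 * (M : ℝ) * c₁ * (2 : ℝ) ^ s with hKdef
  have hK0 : 0 < K := mul_pos (mul_pos (mul_pos two_pos hM0) hc₁) h2s
  refine ⟨max M (⌈K * (2 : ℝ) ^ (s + 1) / (ε * c₂)⌉₊ + 1), fun Λ hΛ => ?_⟩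
  have hΛM : M ≤ Λ := le_trans (le_max_left _ _) hΛ
  have hΛ1 : 1 ≤ Λ := le_trans hM1 hΛM
  have hΛpos : (0 : ℝ) < (Λ : ℝ) := by exact_mod_cast Nat.lt_of_lt_of_le Nat.zero_lt_one hΛ1
  have hΛbig : K * (2 : ℝ) ^ (s + 1) / (ε * c₂) < (Λ : ℝ) := by
    have h1 : K * (2 : ℝ) ^ (s + 1) / (ε * c₂) ≤ (⌈K * (2 : ℝ) ^ (s + 1) / (ε * c₂)⌉₊ : ℝ) :=
      Nat.le_ceil _
    have h2 : (⌈K * (2 : ℝ) ^ (s + 1) / (ε * c₂)⌉₊ : ℝ) < (Λ : ℝ) := by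
      have : ⌈K * (2 : ℝ) ^ (s + 1) / (ε * c₂)⌉₊ < Λ := by
        have := le_trans (le_max_right M _) hΛ; omega
      exact_mod_cast this
    linarith
  -- the boundary set
  set U : Set I := ⋃ π ∈ S,
      ({α : I | ℓ α ≤ (Λ : ℝ) ∧ ∃ β : I, ¬ℓ β ≤ (Λ : ℝ) ∧ F.N α π β ≠ 0} ∪
        {β : I | ¬ℓ β ≤ (Λ : ℝ) ∧ ∃ α : I, ℓ α ≤ (Λ : ℝ) ∧ F.N β π α ≠ 0}) with hUdef
  have hcastsub : ((Λ - M : ℕ) : ℝ) = (Λ : ℝ) - (M : ℝ) := by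
    have : M ≤ Λ := hΛM
    push_cast [Nat.cast_sub this]
    ring
  have hUsub : U ⊆ ↑(ball (Λ + M) \ ball (Λ - M)) := by
    intro x hx
    simp only [hUdef, Set.mem_iUnion] at hx
    obtain ⟨π, hπS, hx⟩ := hx
    have hℓπ : ℓ π ≤ (M : ℝ) := le_trans (hL π hπS) hLM
    rw [Finset.mem_coe, Finset.mem_sdiff, mem_ball, mem_ball, hcastsub]
    rcases hx with hx | hx
    · obtain ⟨hxΛ, β, hβΛ, hN⟩ := hx
      have hsub := hℓ.subadd x π β hN
      push_cast
      constructor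
      · linarith
      · push_neg at hβΛ; intro h; linarith
    · obtain ⟨hxΛ, α, hαΛ, hN⟩ := hx
      push_neg at hxΛ
      have hN' : F.N α (F.bar π) x ≠ 0 := by
        rw [← F.frob₂]; exact hN
      have hsub := hℓ.subadd α (F.bar π) x hN'
      rw [hℓ.map_bar] at hsub
      push_cast
      constructor
      · linarith
      · intro h; linarith
  have hUfin : U.Finite := (ball (Λ + M) \ ball (Λ - M)).finite_toSet.subset hUsub
  have hUsum : ∑ᶠ ξ ∈ U, F.d ξ ^ 2 = ∑ x ∈ hUfin.toFinset, F.d x ^ 2 :=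
    finsum_mem_eq_finite_toFinset_sum _ hUfin
  have hstep1 : (∑ x ∈ hUfin.toFinset, F.d x ^ 2) ≤
      ∑ x ∈ ball (Λ + M) \ ball (Λ - M), F.d x ^ 2 := by
    apply Finset.sum_le_sum_of_subset_of_nonneg
    · intro x hx
      rw [Set.Finite.mem_toFinset] at hx
      exact hUsub hx
    · intro x _ _; exact sq_nonneg _
  have hballsub : ball (Λ - M) ⊆ ball (Λ + M) := by
    intro x hx
    rw [mem_ball] at hx ⊢
    refine le_trans hx ?_
    have : (Λ - M : ℕ) ≤ (Λ + M : ℕ) := by omega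
    exact_mod_cast this
  have hstep2 : (∑ x ∈ ball (Λ + M) \ ball (Λ - M), F.d x ^ 2) = B (Λ + M) - B (Λ - M) :=
    Finset.sum_sdiff_eq_sub hballsub
  -- upper bound on the difference
  have hdiff : B (Λ + M) - B (Λ - M) ≤ 2 * (M : ℝ) * (c₁ * ((Λ + M : ℕ) : ℝ) ^ s) := by
    have := key_up (Λ - M) (2 * M)
    have heq : Λ - M + 2 * M = Λ + M := by omega
    rw [heq] at this
    push_cast at this ⊢
    linarith
  have hΛM2 : ((Λ + M : ℕ) : ℝ) ^ s ≤ (2 : ℝ) ^ s * (Λ : ℝ) ^ s := by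
    rw [← Real.mul_rpow (by norm_num) (Nat.cast_nonneg Λ)]
    apply Real.rpow_le_rpow (Nat.cast_nonneg _) _ hs.le
    push_cast
    have : (M : ℝ) ≤ (Λ : ℝ) := by exact_mod_cast hΛM
    linarith
  have hupper : ∑ᶠ ξ ∈ U, F.d ξ ^ 2 ≤ K * (Λ : ℝ) ^ s := by
    rw [hUsum, hKdef]
    calc (∑ x ∈ hUfin.toFinset, F.d x ^ 2)
        ≤ B (Λ + M) - B (Λ - M) := by rw [← hstep2]; exact hstep1
      _ ≤ 2 * (M : ℝ) * (c₁ * ((Λ + M : ℕ) : ℝ) ^ s) := hdiff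
      _ ≤ 2 * (M : ℝ) * c₁ * (2 : ℝ) ^ s * (Λ : ℝ) ^ s := by
          have h1 : 2 * (M : ℝ) * c₁ * (((Λ + M : ℕ) : ℝ) ^ s) ≤
              2 * (M : ℝ) * c₁ * ((2 : ℝ) ^ s * (Λ : ℝ) ^ s) := by
            apply mul_le_mul_of_nonneg_left hΛM2
            positivity
          nlinarith [h1]
  -- lower bound on B Λ
  have hhalf1 : (Λ : ℝ) / 2 ≤ ((Λ - Λ / 2 : ℕ) : ℝ) := by
    have h : Λ ≤ 2 * (Λ - Λ / 2) := by omega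
    have h' : (Λ : ℝ) ≤ 2 * ((Λ - Λ / 2 : ℕ) : ℝ) := by exact_mod_cast h
    linarith
  have hhalf2 : (Λ : ℝ) / 2 ≤ ((Λ / 2 + 1 : ℕ) : ℝ) := by
    have h : Λ ≤ 2 * (Λ / 2 + 1) := by omega
    have h' : (Λ : ℝ) ≤ 2 * ((Λ / 2 + 1 : ℕ) : ℝ) := by exact_mod_cast h
    linarith
  have hlowB : ((Λ : ℝ) / 2) * (c₂ * ((Λ : ℝ) / 2) ^ s) ≤ B Λ := by
    have hk := key_low (Λ / 2) (Λ - Λ / 2)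
    have heq : Λ / 2 + (Λ - Λ / 2) = Λ := by omega
    rw [heq] at hk
    have hmono : ((Λ : ℝ) / 2) ^ s ≤ ((Λ / 2 + 1 : ℕ) : ℝ) ^ s :=
      Real.rpow_le_rpow (by positivity) hhalf2 hs.le
    have hterm : ((Λ : ℝ) / 2) * (c₂ * ((Λ : ℝ) / 2) ^ s) ≤
        ((Λ - Λ / 2 : ℕ) : ℝ) * (c₂ * ((Λ / 2 + 1 : ℕ) : ℝ) ^ s) := by
      apply mul_le_mul hhalf1 (mul_le_mul_of_nonneg_left hmono hc₂.le) (by positivity)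
        (Nat.cast_nonneg _)
    have hB0 := hBnonneg (Λ / 2)
    linarith
  -- finish
  rw [hB Λ]
  have h2s1 : (2 : ℝ) ^ (s + 1) = 2 * (2 : ℝ) ^ s := by
    rw [Real.rpow_add two_pos, Real.rpow_one]; ring
  have hKlt : K * (Λ : ℝ) ^ s < ε * (((Λ : ℝ) / 2) * (c₂ * ((Λ : ℝ) / 2) ^ s)) := by
    have hεc : 0 < ε * c₂ := mul_pos hε hc₂
    have h1 : K * (2 : ℝ) ^ (s + 1) < ε * c₂ * (Λ : ℝ) := by
      rw [div_lt_iff₀ hεc] at hΛbig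
      linarith
    have hΛs : (0 : ℝ) < (Λ : ℝ) ^ s := Real.rpow_pos_of_pos hΛpos s
    have hdiv : ((Λ : ℝ) / 2) ^ s = (Λ : ℝ) ^ s / (2 : ℝ) ^ s :=
      Real.div_rpow (Nat.cast_nonneg _) (by norm_num) s
    rw [hdiv]
    have h2 : K * (Λ : ℝ) ^ s * (2 * (2 : ℝ) ^ s) < ε * c₂ * (Λ : ℝ) * (Λ : ℝ) ^ s := by
      rw [h2s1] at h1
      calc K * (Λ : ℝ) ^ s * (2 * (2 : ℝ) ^ s) = (K * (2 * (2 : ℝ) ^ s)) * (Λ : ℝ) ^ s := by ring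
        _ < (ε * c₂ * (Λ : ℝ)) * (Λ : ℝ) ^ s := by
            exact mul_lt_mul_of_pos_right h1 hΛs
        _ = ε * c₂ * (Λ : ℝ) * (Λ : ℝ) ^ s := by ring
    have h3 : ε * (((Λ : ℝ) / 2) * (c₂ * ((Λ : ℝ) ^ s / (2 : ℝ) ^ s))) =
        ε * c₂ * (Λ : ℝ) * (Λ : ℝ) ^ s / (2 * (2 : ℝ) ^ s) := by
      field_simp
    rw [h3]
    rw [lt_div_iff₀ (by positivity)]
    exact h2
  calc ∑ᶠ ξ ∈ U, F.d ξ ^ 2 ≤ K * (Λ : ℝ) ^ s := hupper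
    _ < ε * (((Λ : ℝ) / 2) * (c₂ * ((Λ : ℝ) / 2) ^ s)) := hKlt
    _ ≤ ε * B Λ := mul_le_mul_of_nonneg_left hlowB hε.le
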